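/- Let τ ∈ (0,1], p_min > 0, and let X be a random variable with values in [0,1] whose law has a density p with respect to Lebesgue measure satisfying p(x) ≥ p_min for all x ∈ [0,1]. Then the function f(b) = τ⁻¹ E[(b − X)⁺] − b is (p_min/τ)-strongly convex on [0,1]: for all b₁, b₂ ∈ [0,1] and λ ∈ [0,1], f(λb₁ + (1−λ)b₂) ≤ λ f(b₁) + (1−λ) f(b₂) − (p_min/(2τ)) λ(1−λ)(b₁ − b₂)². -/

import Mathlib

open MeasureTheory
open scoped NNReal ENNReal

lemma max_sub_integral (b : ℝ) (hb0 : 0 ≤ b) (hb1 : b ≤ 1) :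
    ∫ x in Set.Ioc (0:ℝ) 1, max (b - x) 0 = b^2/2 := by
  rw [← intervalIntegral.integral_of_le (by norm_num : (0:ℝ) ≤ 1)]
  have hi1 : IntervalIntegrable (fun x => max (b - x) 0) volume 0 b :=
    (Continuous.max (by continuity) continuous_const).intervalIntegrable _ _
  have hi2 : IntervalIntegrable (fun x => max (b - x) 0) volume b 1 :=
    (Continuous.max (by continuity) continuous_const).intervalIntegrable _ _
  rw [← intervalIntegral.integral_add_adjacent_intervals hi1 hi2]
  have h1 : ∫ x in (0:ℝ)..b, max (b - x) 0 = ∫ x in (0:ℝ)..b, (b - x) := by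
    apply intervalIntegral.integral_congr
    intro x hx
    rw [Set.uIcc_of_le hb0] at hx
    exact max_eq_left (by linarith [hx.2])
  have h2 : ∫ x in b..(1:ℝ), max (b - x) 0 = 0 := by
    rw [intervalIntegral.integral_congr (g := fun _ => (0:ℝ)) ?_]
    · simp
    · intro x hx
      rw [Set.uIcc_of_le hb1] at hx
      exact max_eq_right (by linarith [hx.1])
  rw [h1, h2, intervalIntegral.integral_sub intervalIntegrable_const
      (intervalIntegral.intervalIntegrable_id)]
  simp
  ring

theorem cvar_objective_strongly_convex {Ω : Type*} [MeasurableSpace Ω]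
    (μ : Measure Ω) [IsProbabilityMeasure μ]
    (τ pmin : ℝ) (hτ : τ ∈ Set.Ioc (0:ℝ) 1) (hpmin : 0 < pmin)
    (X : Ω → ℝ) (hXmeas : Measurable X) (hX01 : ∀ ω, X ω ∈ Set.Icc (0:ℝ) 1)
    (pdf : ℝ → ℝ) (hpdfmeas : Measurable pdf)
    (hdensity : Measure.map X μ = volume.withDensity (fun x => ENNReal.ofReal (pdf x)))
    (hlb : ∀ x ∈ Set.Icc (0:ℝ) 1, pmin ≤ pdf x) :
    ∀ b₁ ∈ Set.Icc (0:ℝ) 1, ∀ b₂ ∈ Set.Icc (0:ℝ) 1, ∀ l ∈ Set.Icc (0:ℝ) 1,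
      (τ⁻¹ * ∫ ω, max ((l*b₁ + (1-l)*b₂) - X ω) 0 ∂μ - (l*b₁ + (1-l)*b₂))
        ≤ l * (τ⁻¹ * ∫ ω, max (b₁ - X ω) 0 ∂μ - b₁)
          + (1-l) * (τ⁻¹ * ∫ ω, max (b₂ - X ω) 0 ∂μ - b₂)
          - (pmin/(2*τ)) * l * (1-l) * (b₁ - b₂)^2 := by
  obtain ⟨hτ0, hτ1⟩ := hτ
  intro b₁ hb₁ b₂ hb₂ l hl
  have hl0 := hl.1
  have hl1 : (0:ℝ) ≤ 1 - l := by linarith [hl.2]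
  set bl := l*b₁ + (1-l)*b₂ with hbl
  have hbl01 : bl ∈ Set.Icc (0:ℝ) 1 :=
    ⟨by nlinarith [hb₁.1, hb₂.1], by nlinarith [hb₁.2, hb₂.2]⟩
  -- integrability over μ
  have hint : ∀ b ∈ Set.Icc (0:ℝ) 1, Integrable (fun ω => max (b - X ω) 0) μ := by
    intro b hb
    apply Integrable.mono' (integrable_const (1:ℝ))
    · exact ((measurable_const.sub hXmeas).max measurable_const).aestronglyMeasurable
    · filter_upwards with ω
      rw [Real.norm_eq_abs, abs_of_nonneg (le_max_right _ _)]
      exact max_le (by linarith [(hX01 ω).1, hb.2]) (by norm_num)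
  set D : ℝ → ℝ := fun x => l * max (b₁ - x) 0 + (1-l) * max (b₂ - x) 0 - max (bl - x) 0
    with hD
  have mcont : ∀ b : ℝ, Continuous (fun x => max (b - x) 0) := fun b =>
    (continuous_const.sub continuous_id).max continuous_const
  have hDcont : Continuous D :=
    ((continuous_const.mul (mcont b₁)).add (continuous_const.mul (mcont b₂))).sub (mcont bl)
  have hD0 : ∀ x, 0 ≤ D x := by
    intro x
    have hR : max (bl - x) 0 ≤ l * max (b₁ - x) 0 + (1-l) * max (b₂ - x) 0 := by
      apply max_le
      · have h1 := mul_le_mul_of_nonneg_left (le_max_left (b₁ - x) 0) hl0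
        have h2 := mul_le_mul_of_nonneg_left (le_max_left (b₂ - x) 0) hl1
        have : bl - x = l * (b₁ - x) + (1-l) * (b₂ - x) := by rw [hbl]; ring
        linarith
      · exact add_nonneg (mul_nonneg hl0 (le_max_right _ _))
          (mul_nonneg hl1 (le_max_right _ _))
    simp only [hD]
    linarith
  -- combination over μ
  have hintD : Integrable (fun ω => D (X ω)) μ :=
    (((hint b₁ hb₁).const_mul l).add ((hint b₂ hb₂).const_mul (1-l))).sub (hint bl hbl01)
  have comb : ∫ ω, D (X ω) ∂μ
      = l * ∫ ω, max (b₁ - X ω) 0 ∂μ + (1-l) * ∫ ω, max (b₂ - X ω) 0 ∂μ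
        - ∫ ω, max (bl - X ω) 0 ∂μ := by
    simp only [hD]
    have ha : Integrable (fun ω => l * max (b₁ - X ω) 0 + (1-l) * max (b₂ - X ω) 0) μ :=
      ((hint b₁ hb₁).const_mul l).add ((hint b₂ hb₂).const_mul (1-l))
    rw [integral_sub ha (hint bl hbl01),
      integral_add ((hint b₁ hb₁).const_mul l) ((hint b₂ hb₂).const_mul (1-l)),
      integral_const_mul, integral_const_mul]
  -- push to the law of X
  have hDaesm : AEStronglyMeasurable D (Measure.map X μ) := hDcont.aestronglyMeasurable
  have push : ∫ ω, D (X ω) ∂μ = ∫ x, D x ∂(Measure.map X μ) :=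
    (integral_map hXmeas.aemeasurable hDaesm).symm
  have hintDν : Integrable D (Measure.map X μ) :=
    (integrable_map_measure hDaesm hXmeas.aemeasurable).mpr hintD
  -- withDensity
  have hden : (fun x => ENNReal.ofReal (pdf x))
      = fun x => (((pdf x).toNNReal : ℝ≥0) : ENNReal) := rfl
  have hwd : ∫ x, D x ∂(Measure.map X μ) = ∫ x, ((pdf x).toNNReal : ℝ≥0) • D x := by
    rw [hdensity, hden]
    exact integral_withDensity_eq_integral_smul hpdfmeas.real_toNNReal D
  have hsm : (fun x => ((pdf x).toNNReal : ℝ≥0) • D x) = fun x => max (pdf x) 0 * D x := by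
    funext x
    rw [NNReal.smul_def, Real.coe_toNNReal', smul_eq_mul]
  have hintsmul : Integrable (fun x => max (pdf x) 0 * D x) volume := by
    rw [← hsm]
    exact (integrable_withDensity_iff_integrable_smul hpdfmeas.real_toNNReal (g := D)).mp
      (by rw [← hden, ← hdensity]; exact hintDν)
  -- restrict to [0,1]
  have step1 : ∫ x in Set.Ioc (0:ℝ) 1, max (pdf x) 0 * D x ≤ ∫ x, max (pdf x) 0 * D x :=
    setIntegral_le_integral hintsmul
      (by filter_upwards with x
          exact mul_nonneg (le_max_right _ _) (hD0 x))
  have step2 : ∫ x in Set.Ioc (0:ℝ) 1, pmin * D x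
      ≤ ∫ x in Set.Ioc (0:ℝ) 1, max (pdf x) 0 * D x := by
    apply setIntegral_mono_on
    · exact (continuous_const.mul hDcont).integrableOn_Ioc
    · exact hintsmul.integrableOn
    · exact measurableSet_Ioc
    · intro x hx
      have hx' : x ∈ Set.Icc (0:ℝ) 1 := ⟨hx.1.le, hx.2⟩
      have : pmin ≤ max (pdf x) 0 := le_max_of_le_left (hlb x hx')
      exact mul_le_mul_of_nonneg_right this (hD0 x)
  have step3 : ∫ x in Set.Ioc (0:ℝ) 1, pmin * D x
      = pmin * (l * (1-l) * (b₁ - b₂)^2 / 2) := by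
    rw [integral_const_mul]
    have hDint : ∫ x in Set.Ioc (0:ℝ) 1, D x
        = l * (b₁^2/2) + (1-l) * (b₂^2/2) - bl^2/2 := by
      simp only [hD]
      have i1 : IntegrableOn (fun x => max (b₁ - x) 0) (Set.Ioc (0:ℝ) 1) volume :=
        (mcont b₁).integrableOn_Ioc
      have i2 : IntegrableOn (fun x => max (b₂ - x) 0) (Set.Ioc (0:ℝ) 1) volume :=
        (mcont b₂).integrableOn_Ioc
      have i3 : IntegrableOn (fun x => max (bl - x) 0) (Set.Ioc (0:ℝ) 1) volume :=
        (mcont bl).integrableOn_Ioc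
      have ha : IntegrableOn (fun x => l * max (b₁ - x) 0 + (1-l) * max (b₂ - x) 0)
          (Set.Ioc (0:ℝ) 1) volume := (i1.const_mul l).add (i2.const_mul (1-l))
      rw [integral_sub ha i3,
        integral_add (i1.const_mul l) (i2.const_mul (1-l)),
        integral_const_mul, integral_const_mul,
        max_sub_integral b₁ hb₁.1 hb₁.2, max_sub_integral b₂ hb₂.1 hb₂.2,
        max_sub_integral bl hbl01.1 hbl01.2]
    rw [hDint, hbl]
    ring
  -- key inequality
  have key : ∫ ω, max (bl - X ω) 0 ∂μ + pmin * (l * (1-l) * (b₁ - b₂)^2 / 2)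
      ≤ l * ∫ ω, max (b₁ - X ω) 0 ∂μ + (1-l) * ∫ ω, max (b₂ - X ω) 0 ∂μ := by
    have := hwd
    rw [hsm] at this
    linarith [step1, step2, step3, comb, push, this]
  -- conclude
  set G₁ := ∫ ω, max (b₁ - X ω) 0 ∂μ
  set G₂ := ∫ ω, max (b₂ - X ω) 0 ∂μ
  set Gl := ∫ ω, max (bl - X ω) 0 ∂μ
  have h := mul_le_mul_of_nonneg_left key (inv_nonneg.mpr hτ0.le)
  have h2 : τ⁻¹ * Gl + τ⁻¹ * (pmin/2) * l * (1-l) * (b₁ - b₂)^2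
      ≤ τ⁻¹ * (l * G₁) + τ⁻¹ * ((1-l) * G₂) := by nlinarith [h]
  have hrw : pmin/(2*τ) = τ⁻¹ * (pmin/2) := by field_simp
  rw [hbl] at *
  have h3 : l * (τ⁻¹ * G₁ - b₁) + (1-l) * (τ⁻¹ * G₂ - b₂)
        - (pmin/(2*τ)) * l * (1-l) * (b₁ - b₂)^2
        - (τ⁻¹ * Gl - (l*b₁ + (1-l)*b₂))
      = (τ⁻¹ * (l * G₁) + τ⁻¹ * ((1-l) * G₂))
        - (τ⁻¹ * Gl + τ⁻¹ * (pmin/2) * l * (1-l) * (b₁ - b₂)^2) := by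
    rw [hrw]; ring
  linarith [h2, h3]
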